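/- Let k ∈ (0,1]. Then (for every l ∈ ℤ there exist m, m' ∈ ℕ with |1 + l/k| = |l+1| + m and |1 − l/k| = |l−1| + m') if and only if there exists n ∈ ℕ, n ≥ 1, with k = 1/n. -/
import Mathlib


open Real

lemma em_aux (n : ℕ) (hn : 1 ≤ n) (l : ℤ) :
    ∃ m : ℕ, |1 + l * (n : ℤ)| = |l + 1| + (m : ℤ) := by
  have hn' : (1 : ℤ) ≤ (n : ℤ) := by exact_mod_cast hn
  have hle : |l + 1| ≤ |1 + l * (n : ℤ)| := by
    rcases le_or_gt 0 l with h0 | h0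
    · rw [abs_of_nonneg (by nlinarith : (0:ℤ) ≤ l + 1),
        abs_of_nonneg (by nlinarith : (0:ℤ) ≤ 1 + l * n)]
      nlinarith
    · have hl1 : l ≤ -1 := by omega
      rw [abs_of_nonpos (by nlinarith : l + 1 ≤ 0),
        abs_of_nonpos (by nlinarith : 1 + l * (n:ℤ) ≤ 0)]
      nlinarith
  refine ⟨(|1 + l * (n : ℤ)| - |l + 1|).toNat, ?_⟩
  rw [Int.toNat_of_nonneg (sub_nonneg.2 hle)]
  ring

/-- For a metric parameter `k ∈ (0,1]`, the condition that for every integer `l` the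
electromagnetic radial exponents `|1 ± l/k|` exceed the angular numbers `|l ± 1|` by
natural numbers holds exactly for `k = 1/n`, `n = 1, 2, …`. -/
theorem em_modes_exponent_condition_iff_k_inv_nat (k : ℝ) (hk0 : 0 < k) (hk1 : k ≤ 1) :
    (∀ l : ℤ, ∃ m m' : ℕ,
        |1 + (l : ℝ) / k| = |(l : ℝ) + 1| + (m : ℝ) ∧
        |1 - (l : ℝ) / k| = |(l : ℝ) - 1| + (m' : ℝ)) ↔
      ∃ n : ℕ, 1 ≤ n ∧ k = 1 / (n : ℝ) := by
  constructor
  · intro h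
    obtain ⟨m, m', h1, h2⟩ := h 1
    have hk : (0:ℝ) < 1 / k := by positivity
    rw [abs_of_pos (by linarith : (0:ℝ) < 1 + (1:ℤ) / k)] at h1
    have h1' : 1 / k = 1 + (m : ℝ) := by
      push_cast at h1 ⊢
      rw [abs_of_nonneg (by norm_num : (0:ℝ) ≤ (1:ℝ) + 1)] at h1
      linarith
    refine ⟨m + 1, by omega, ?_⟩
    push_cast
    field_simp at h1' ⊢
    nlinarith [h1']
  · rintro ⟨n, hn, rfl⟩
    intro l
    have hn0 : (0:ℝ) < (n:ℝ) := by exact_mod_cast Nat.lt_of_lt_of_le Nat.zero_lt_one hn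
    have hdiv : (l : ℝ) / (1 / (n:ℝ)) = (l : ℝ) * n := by
      field_simp
    obtain ⟨m, hm⟩ := em_aux n hn l
    obtain ⟨m', hm'⟩ := em_aux n hn (-l)
    refine ⟨m, m', ?_, ?_⟩
    · rw [hdiv]
      have := congrArg (fun x : ℤ => (x : ℝ)) hm
      push_cast at this
      exact this
    · rw [hdiv]
      have := congrArg (fun x : ℤ => (x : ℝ)) hm'
      push_cast at this
      calc |1 - (l:ℝ) * n| = |1 + (-l:ℝ) * n| := by ring_nf
        _ = |(-l:ℝ) + 1| + m' := this
        _ = |(l:ℝ) - 1| + m' := by rw [← abs_neg ((-l:ℝ) + 1)]; ring_nf
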